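/- A minimal monomial sequence f_1, ..., f_n in a polynomial ring over a field is a proper sequence if and only if gcd(f_i, f_j) divides f_k for all 1 ≤ i < j < k ≤ n. -/

import Mathlib

open MvPolynomial

/-- `f_0,…,f_{n-1}` (0-based) is a proper sequence if
`f_r · H_1(f_0,…,f_{r-1}; R) = 0` for every `r`: every Koszul 1-cycle `v`
supported on the first `r` elements, multiplied by `f_r`, lies in the
submodule generated by the Koszul boundaries `f_j e_i - f_i e_j`
(`i < j < r`). -/
def IsProperSequence {R : Type*} [CommRing R] {n : ℕ} (f : Fin n → R) : Prop :=
  ∀ r : Fin n, ∀ v : Fin n → R,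
    (∀ j, r ≤ j → v j = 0) → (∑ j, v j * f j = 0) →
      (fun j => f r * v j) ∈ Submodule.span R
        {w : Fin n → R | ∃ i j : Fin n, i < j ∧ j < r ∧
          w = Pi.single i (f j) - Pi.single j (f i)}

namespace Stmt7Aux

variable {K : Type*} [Field K] {m n : ℕ}

lemma mono_dvd_of_le {u v : Fin m →₀ ℕ} (h : u ≤ v) :
    (monomial u (1:K)) ∣ monomial v 1 :=
  monomial_dvd_monomial.mpr ⟨Or.inr h, dvd_rfl⟩

lemma le_of_mono_dvd {u v : Fin m →₀ ℕ} (h : (monomial u (1:K)) ∣ monomial v 1) : u ≤ v := by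
  rcases monomial_dvd_monomial.mp h with ⟨h1 | h1, -⟩
  · exact absurd h1 one_ne_zero
  · exact h1

lemma sum_single_mul (a : Fin n → (Fin m →₀ ℕ)) (z : Fin n) (B : MvPolynomial (Fin m) K) :
    ∑ q, (Pi.single z B : Fin n → MvPolynomial (Fin m) K) q * monomial (a q) 1
      = B * monomial (a z) 1 := by
  rw [Finset.sum_eq_single z]
  · rw [Pi.single_eq_same]
  · intro b _ hb; rw [Pi.single_eq_of_ne hb, zero_mul]
  · intro h; exact absurd (Finset.mem_univ z) h

lemma pair_mem (a : Fin n → (Fin m →₀ ℕ)) (r u v : Fin n) (huv : u < v) (hvr : v < r)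
    (hg : a u ⊓ a v ≤ a r) (d : Fin m →₀ ℕ) (hu : a u ≤ d) (hv : a v ≤ d) (c : K) :
    (fun q => monomial (a r) (1:K) *
        (C c * ((Pi.single u (monomial (d - a u) (1:K)) : Fin n → MvPolynomial (Fin m) K) q
          - (Pi.single v (monomial (d - a v) (1:K)) : Fin n → MvPolynomial (Fin m) K) q)))
      ∈ Submodule.span (MvPolynomial (Fin m) K)
        {w : Fin n → MvPolynomial (Fin m) K | ∃ i j : Fin n, i < j ∧ j < r ∧
          w = Pi.single i (monomial (a j) 1) - Pi.single j (monomial (a i) 1)} := by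
  have hgen : (Pi.single u (monomial (a v) (1:K)) - Pi.single v (monomial (a u) 1) :
      Fin n → MvPolynomial (Fin m) K)
      ∈ {w : Fin n → MvPolynomial (Fin m) K | ∃ i j : Fin n, i < j ∧ j < r ∧
          w = Pi.single i (monomial (a j) 1) - Pi.single j (monomial (a i) 1)} :=
    ⟨u, v, huv, hvr, rfl⟩
  have hsm := Submodule.smul_mem
    (Submodule.span (MvPolynomial (Fin m) K)
      {w : Fin n → MvPolynomial (Fin m) K | ∃ i j : Fin n, i < j ∧ j < r ∧
          w = Pi.single i (monomial (a j) 1) - Pi.single j (monomial (a i) 1)})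
    (monomial ((a r - a u ⊓ a v) + (d - (a u ⊔ a v))) c) (Submodule.subset_span hgen)
  convert hsm using 1
  have he1 : a r + (d - a u) = (a r - a u ⊓ a v) + (d - (a u ⊔ a v)) + a v := by
    ext s
    have h1 := Finsupp.le_def.mp hg s
    have h2 := Finsupp.le_def.mp hu s
    have h3 := Finsupp.le_def.mp hv s
    simp only [Finsupp.add_apply, Finsupp.tsub_apply, Finsupp.inf_apply, Finsupp.sup_apply] at *
    omega
  have he2 : a r + (d - a v) = (a r - a u ⊓ a v) + (d - (a u ⊔ a v)) + a u := by
    ext s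
    have h1 := Finsupp.le_def.mp hg s
    have h2 := Finsupp.le_def.mp hu s
    have h3 := Finsupp.le_def.mp hv s
    simp only [Finsupp.add_apply, Finsupp.tsub_apply, Finsupp.inf_apply, Finsupp.sup_apply] at *
    omega
  funext q
  simp only [Pi.smul_apply, Pi.sub_apply, smul_eq_mul]
  by_cases hqu : q = u
  · subst hqu
    simp only [Pi.single_eq_same, Pi.single_eq_of_ne huv.ne, sub_zero]
    rw [C_mul_monomial]
    simp [monomial_mul, he1]
  · by_cases hqv : q = v
    · subst hqv
      simp only [Pi.single_eq_same, Pi.single_eq_of_ne huv.ne', zero_sub, sub_zero]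
      rw [mul_neg, mul_neg, C_mul_monomial]
      simp [monomial_mul, he2]
    · simp [Pi.single_eq_of_ne hqu, Pi.single_eq_of_ne hqv]
lemma fwd (a : Fin n → (Fin m →₀ ℕ))
    (hdvd : ∀ i j k : Fin n, i < j → j < k → a i ⊓ a j ≤ a k) (r : Fin n) :
    ∀ (N : ℕ) (w : Fin n → MvPolynomial (Fin m) K),
      (∑ q, (w q).support.card ≤ N) → (∀ q, r ≤ q → w q = 0) →
      (∑ q, w q * monomial (a q) 1 = 0) →
      (fun q => monomial (a r) (1:K) * w q) ∈ Submodule.span (MvPolynomial (Fin m) K)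
        {w' : Fin n → MvPolynomial (Fin m) K | ∃ i j : Fin n, i < j ∧ j < r ∧
          w' = Pi.single i (monomial (a j) 1) - Pi.single j (monomial (a i) 1)} := by
  intro N
  induction N with
  | zero =>
    intro w hcard _ _
    have hw : ∀ q, w q = 0 := by
      intro q
      have h2 : (w q).support.card ≤ ∑ x, (w x).support.card :=
        Finset.single_le_sum (f := fun x => (w x).support.card)
          (fun x _ => Nat.zero_le _) (Finset.mem_univ q)
      have h1 : (w q).support.card = 0 := by omega
      rw [Finset.card_eq_zero] at h1
      exact support_eq_empty.mp h1
    have hz : (fun q => monomial (a r) (1:K) * w q) = 0 := by funext q; simp [hw q]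
    rw [hz]; exact Submodule.zero_mem _
  | succ N ih =>
    intro w hcard hsupp hsyz
    by_cases h0 : ∀ q, w q = 0
    · have hz : (fun q => monomial (a r) (1:K) * w q) = 0 := by funext q; simp [h0 q]
      rw [hz]; exact Submodule.zero_mem _
    push_neg at h0
    obtain ⟨q0, hq0⟩ := h0
    have hq0r : q0 < r := lt_of_not_ge fun h => hq0 (hsupp q0 h)
    obtain ⟨b0, hb0⟩ := Finset.nonempty_iff_ne_empty.mpr
      (fun h => hq0 (support_eq_empty.mp h))
    have hcne : coeff b0 (w q0) ≠ 0 := mem_support_iff.mp hb0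
    set c := coeff b0 (w q0) with hc
    set d := b0 + a q0 with hd
    have ha0 : a q0 ≤ d := le_add_self
    have hb0d : d - a q0 = b0 := add_tsub_cancel_right b0 (a q0)
    -- the coefficient of `d` in the syzygy relation
    have hco : ∑ q, (if a q ≤ d then coeff (d - a q) (w q) * 1 else 0) = 0 := by
      have h1 : ∑ q, coeff d (w q * monomial (a q) 1) = 0 := by
        rw [← coeff_sum, hsyz, coeff_zero]
      exact (Finset.sum_congr rfl fun q _ => (coeff_mul_monomial' d (a q) 1 (w q)).symm).trans h1
    have hex : ∃ q1, q1 ≠ q0 ∧ a q1 ≤ d ∧ coeff (d - a q1) (w q1) ≠ 0 := by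
      by_contra hno
      push_neg at hno
      have h2 : ∑ q, (if a q ≤ d then coeff (d - a q) (w q) * 1 else 0)
          = (if a q0 ≤ d then coeff (d - a q0) (w q0) * 1 else 0) := by
        apply Finset.sum_eq_single q0
        · intro b _ hb
          by_cases hbd : a b ≤ d
          · rw [if_pos hbd, hno b hb hbd, zero_mul]
          · rw [if_neg hbd]
        · intro h; exact absurd (Finset.mem_univ q0) h
      rw [h2, if_pos ha0, hb0d, mul_one] at hco
      exact hcne hco
    obtain ⟨q1, hq10, ha1, hc1⟩ := hex
    have hq1r : q1 < r := by
      by_contra h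
      rw [not_lt] at h
      rw [hsupp q1 h, coeff_zero] at hc1
      exact hc1 rfl
    -- elementary syzygy to subtract
    set E : Fin n → MvPolynomial (Fin m) K := fun q =>
      C c * ((Pi.single q0 (monomial (d - a q0) (1:K)) : Fin n → MvPolynomial (Fin m) K) q
        - (Pi.single q1 (monomial (d - a q1) (1:K)) : Fin n → MvPolynomial (Fin m) K) q)
      with hE
    set w' : Fin n → MvPolynomial (Fin m) K := fun q => w q - E q with hw'
    have hEq0 : E q0 = monomial b0 c := by
      rw [hE]
      simp only [Pi.single_eq_same, Pi.single_eq_of_ne hq10.symm, sub_zero, hb0d]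
      rw [C_mul_monomial, mul_one]
    have hEq1 : E q1 = -monomial (d - a q1) c := by
      rw [hE]
      simp only [Pi.single_eq_same, Pi.single_eq_of_ne hq10, zero_sub, mul_neg]
      rw [C_mul_monomial, mul_one]
    have hEother : ∀ q, q ≠ q0 → q ≠ q1 → E q = 0 := by
      intro q h1 h2
      rw [hE]
      simp [Pi.single_eq_of_ne h1, Pi.single_eq_of_ne h2]
    -- support cards
    have hs0 : (w' q0).support = (w q0).support.erase b0 := by
      ext b
      rw [hw']
      simp only [mem_support_iff, Finset.mem_erase, coeff_sub, hEq0, coeff_monomial]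
      by_cases hb : b0 = b
      · subst hb
        simp [← hc]
      · simp only [if_neg hb, sub_zero]
        constructor
        · intro h; exact ⟨fun he => hb he.symm, h⟩
        · intro h; exact h.2
    have hs1 : (w' q1).support ⊆ (w q1).support := by
      intro b hb
      rw [hw'] at hb
      simp only [mem_support_iff, coeff_sub, hEq1, coeff_neg, coeff_monomial] at hb
      simp only [mem_support_iff]
      by_cases hbd : d - a q1 = b
      · subst hbd; exact hc1
      · simpa [if_neg hbd] using hb
    have hsother : ∀ q, q ≠ q0 → q ≠ q1 → w' q = w q := by
      intro q h1 h2; rw [hw']; simp [hEother q h1 h2]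
    have hcard' : ∑ q, ((w' q).support.card) ≤ N := by
      have hlt : ∑ q, ((w' q).support.card) < ∑ q, ((w q).support.card) := by
        apply Finset.sum_lt_sum
        · intro q _
          by_cases h1 : q = q0
          · subst h1; rw [hs0]; exact Finset.card_le_card (Finset.erase_subset _ _)
          by_cases h2 : q = q1
          · subst h2; exact Finset.card_le_card hs1
          · rw [hsother q h1 h2]
        · exact ⟨q0, Finset.mem_univ q0, by
            rw [hs0]; exact Finset.card_erase_lt_of_mem hb0⟩
      omega
    have hsupp' : ∀ q, r ≤ q → w' q = 0 := by
      intro q hq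
      have h1 : q ≠ q0 := fun h => absurd (h ▸ hq) (not_le.mpr hq0r)
      have h2 : q ≠ q1 := fun h => absurd (h ▸ hq) (not_le.mpr hq1r)
      rw [hsother q h1 h2, hsupp q hq]
    have hsyz' : ∑ q, w' q * monomial (a q) 1 = 0 := by
      have hEsum : ∑ q, E q * monomial (a q) 1 = 0 := by
        have h1 : ∀ q, E q * monomial (a q) 1
            = C c * ((Pi.single q0 (monomial (d - a q0) (1:K)) : Fin n → MvPolynomial (Fin m) K) q
                * monomial (a q) 1)
              - C c * ((Pi.single q1 (monomial (d - a q1) (1:K)) : Fin n → MvPolynomial (Fin m) K) q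
                * monomial (a q) 1) := by
          intro q; rw [hE]; ring
        rw [Finset.sum_congr rfl fun q _ => h1 q, Finset.sum_sub_distrib,
          ← Finset.mul_sum, ← Finset.mul_sum, sum_single_mul, sum_single_mul,
          monomial_mul, monomial_mul, one_mul, tsub_add_cancel_of_le ha0,
          tsub_add_cancel_of_le ha1, sub_self]
      calc ∑ q, w' q * monomial (a q) 1
          = ∑ q, w q * monomial (a q) 1 - ∑ q, E q * monomial (a q) 1 := by
            rw [← Finset.sum_sub_distrib]
            exact Finset.sum_congr rfl fun q _ => by rw [hw']; ring
        _ = 0 := by rw [hsyz, hEsum, sub_zero]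
    have hmemE : (fun q => monomial (a r) (1:K) * E q) ∈ Submodule.span (MvPolynomial (Fin m) K)
        {w' : Fin n → MvPolynomial (Fin m) K | ∃ i j : Fin n, i < j ∧ j < r ∧
          w' = Pi.single i (monomial (a j) 1) - Pi.single j (monomial (a i) 1)} := by
      rcases hq10.lt_or_gt with h01 | h01
      · have heq : (fun q => monomial (a r) (1:K) * E q)
            = (fun q => monomial (a r) (1:K) *
              (C (-c) * ((Pi.single q1 (monomial (d - a q1) (1:K)) : Fin n → MvPolynomial (Fin m) K) q
                - (Pi.single q0 (monomial (d - a q0) (1:K)) : Fin n → MvPolynomial (Fin m) K) q))) := by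
          funext q; rw [hE, map_neg]; ring
        rw [heq]
        exact pair_mem a r q1 q0 h01 hq0r (hdvd q1 q0 r h01 hq0r) d ha1 ha0 (-c)
      · exact pair_mem a r q0 q1 h01 hq1r (hdvd q0 q1 r h01 hq1r) d ha0 ha1 c
    have hsplit : (fun q => monomial (a r) (1:K) * w q)
        = (fun q => monomial (a r) (1:K) * w' q) + (fun q => monomial (a r) (1:K) * E q) := by
      funext q; simp only [Pi.add_apply]; rw [hw']; ring
    rw [hsplit]
    exact Submodule.add_mem _ (ih w' hcard' hsupp' hsyz') hmemE

lemma cut_lemma (a : Fin n → (Fin m →₀ ℕ)) (i₀ j₀ k₀ : Fin n)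
    (hij : i₀ < j₀) (hjk : j₀ < k₀)
    (PA : Fin n → Prop) [DecidablePred PA]
    (hPAi : PA i₀) (hPAj : ¬ PA j₀)
    (hsub : ∀ q, PA q → a q ≤ a k₀ + (a i₀ ⊔ a j₀))
    (hCC : ∀ u v : Fin n, u < v → v < k₀ → a u + a v ≤ a k₀ + (a i₀ ⊔ a j₀) → (PA u ↔ PA v))
    (hmem : (fun q => monomial (a k₀) (1:K) *
        ((Pi.single i₀ (monomial (a j₀ - a i₀ ⊓ a j₀) (1:K)) : Fin n → MvPolynomial (Fin m) K) q
          - (Pi.single j₀ (monomial (a i₀ - a i₀ ⊓ a j₀) (1:K)) : Fin n → MvPolynomial (Fin m) K) q))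
      ∈ Submodule.span (MvPolynomial (Fin m) K)
        {w : Fin n → MvPolynomial (Fin m) K | ∃ i j : Fin n, i < j ∧ j < k₀ ∧
          w = Pi.single i (monomial (a j) 1) - Pi.single j (monomial (a i) 1)}) : False := by
  classical
  set d0 : Fin m →₀ ℕ := a k₀ + (a i₀ ⊔ a j₀) with hd0
  set A : Finset (Fin n) := Finset.univ.filter PA with hA
  have hmemA : ∀ q, q ∈ A ↔ PA q := by
    intro q; rw [hA, Finset.mem_filter]; simp
  -- the linear functional
  set Φ : (Fin n → MvPolynomial (Fin m) K) → K :=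
    fun x => ∑ q ∈ A, coeff (d0 - a q) (x q) with hΦ
  have pair_sum : ∀ (u v : Fin n), u ≠ v → ∀ (x : Fin n → MvPolynomial (Fin m) K),
      (∀ q, q ≠ u → q ≠ v → x q = 0) →
      Φ x = (if u ∈ A then coeff (d0 - a u) (x u) else 0)
        + (if v ∈ A then coeff (d0 - a v) (x v) else 0) := by
    intro u v huv x hx
    simp only [hΦ]
    have h : ∀ q ∈ A, coeff (d0 - a q) (x q)
        = (if q = u then coeff (d0 - a u) (x u) else 0)
          + (if q = v then coeff (d0 - a v) (x v) else 0) := by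
      intro q _
      by_cases h1 : q = u
      · subst h1; rw [if_pos rfl, if_neg huv, add_zero]
      by_cases h2 : q = v
      · subst h2; rw [if_neg h1, if_pos rfl, zero_add]
      · rw [if_neg h1, if_neg h2, hx q h1 h2, coeff_zero, add_zero]
    rw [Finset.sum_congr rfl h, Finset.sum_add_distrib,
      Finset.sum_ite_eq' A u (fun q => coeff (d0 - a u) (x u)),
      Finset.sum_ite_eq' A v (fun q => coeff (d0 - a v) (x v))]
  -- value of Φ on multiples of generators
  have hkey : ∀ (u v : Fin n), u < v → v < k₀ → ∀ p : MvPolynomial (Fin m) K,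
      Φ (p • ((Pi.single u (monomial (a v) (1:K)) : Fin n → MvPolynomial (Fin m) K)
        - Pi.single v (monomial (a u) 1))) = 0 := by
    intro u v huv hvk p
    set x : Fin n → MvPolynomial (Fin m) K :=
      p • ((Pi.single u (monomial (a v) (1:K)) : Fin n → MvPolynomial (Fin m) K)
        - Pi.single v (monomial (a u) 1)) with hxdef
    have hx : ∀ q, q ≠ u → q ≠ v → x q = 0 := by
      intro q h1 h2
      rw [hxdef]
      simp [Pi.single_eq_of_ne h1, Pi.single_eq_of_ne h2]
    have hxu : x u = p * monomial (a v) 1 := by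
      rw [hxdef]
      simp [Pi.single_eq_same, Pi.single_eq_of_ne huv.ne]
    have hxv : x v = -(p * monomial (a u) 1) := by
      rw [hxdef]
      simp [Pi.single_eq_same, Pi.single_eq_of_ne huv.ne']
    rw [pair_sum u v huv.ne x hx, hxu, hxv, coeff_neg, coeff_mul_monomial',
      coeff_mul_monomial']
    by_cases hAu : u ∈ A <;> by_cases hAv : v ∈ A
    · -- both in A
      have hud0 : a u ≤ d0 := hsub u ((hmemA u).mp hAu)
      have hvd0 : a v ≤ d0 := hsub v ((hmemA v).mp hAv)
      by_cases hedge : a u + a v ≤ d0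
      · rw [if_pos hAu, if_pos hAv,
          if_pos ((le_tsub_iff_left hud0).mpr hedge),
          if_pos ((le_tsub_iff_left hvd0).mpr (by rwa [add_comm])),
          tsub_right_comm]
        ring
      · rw [if_pos hAu, if_pos hAv,
          if_neg (fun h => hedge ((le_tsub_iff_left hud0).mp h)),
          if_neg (fun h => hedge (by rw [add_comm]; exact (le_tsub_iff_left hvd0).mp h))]
        ring
    · -- u ∈ A, v ∉ A : no admissible edge
      have hud0 : a u ≤ d0 := hsub u ((hmemA u).mp hAu)
      rw [if_pos hAu, if_neg hAv,
        if_neg (fun h => hAv ((hmemA v).mpr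
          ((hCC u v huv hvk ((le_tsub_iff_left hud0).mp h)).mp ((hmemA u).mp hAu))))]
      ring
    · -- u ∉ A, v ∈ A
      have hvd0 : a v ≤ d0 := hsub v ((hmemA v).mp hAv)
      rw [if_neg hAu, if_pos hAv,
        if_neg (fun h => hAu ((hmemA u).mpr
          ((hCC u v huv hvk (by rw [add_comm]; exact (le_tsub_iff_left hvd0).mp h)).mpr
            ((hmemA v).mp hAv))))]
      ring
    · rw [if_neg hAu, if_neg hAv]; ring
  -- Φ kills the span (applied to any polynomial multiple)
  have hΦadd : ∀ x y, Φ (x + y) = Φ x + Φ y := by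
    intro x y
    simp only [hΦ]
    simp only [Pi.add_apply, coeff_add]
    rw [Finset.sum_add_distrib]
  have hspan : ∀ p : MvPolynomial (Fin m) K,
      Φ (p • (fun q => monomial (a k₀) (1:K) *
        ((Pi.single i₀ (monomial (a j₀ - a i₀ ⊓ a j₀) (1:K)) : Fin n → MvPolynomial (Fin m) K) q
          - (Pi.single j₀ (monomial (a i₀ - a i₀ ⊓ a j₀) (1:K)) : Fin n → MvPolynomial (Fin m) K) q))) = 0 := by
    refine Submodule.span_induction
      (p := fun x _ => ∀ p' : MvPolynomial (Fin m) K, Φ (p' • x) = 0) ?_ ?_ ?_ ?_ hmem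
    · rintro x ⟨u, v, huv, hvk, rfl⟩ p'
      exact hkey u v huv hvk p'
    · intro p'
      rw [smul_zero]; simp only [hΦ]
      simp
    · intro x y hxmem hymem hx hy p'
      rw [smul_add, hΦadd, hx, hy, add_zero]
    · intro r x hxmem hx p'
      rw [smul_smul]
      exact hx (p' * r)
  -- but Φ of the element is 1
  have h1 := hspan 1
  rw [one_smul] at h1
  have hAi : i₀ ∈ A := (hmemA i₀).mpr hPAi
  have hAj : j₀ ∉ A := fun h => hPAj ((hmemA j₀).mp h)
  rw [pair_sum i₀ j₀ hij.ne _ (by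
      intro q hq1 hq2
      simp [Pi.single_eq_of_ne hq1, Pi.single_eq_of_ne hq2])] at h1
  rw [if_pos hAi, if_neg hAj, add_zero] at h1
  simp only [Pi.single_eq_same, Pi.single_eq_of_ne hij.ne, sub_zero] at h1
  rw [monomial_mul, one_mul, coeff_monomial] at h1
  have he : a k₀ + (a j₀ - a i₀ ⊓ a j₀) = d0 - a i₀ := by
    rw [hd0]
    ext s
    simp only [Finsupp.add_apply, Finsupp.tsub_apply, Finsupp.inf_apply, Finsupp.sup_apply]
    omega
  rw [if_pos he] at h1
  exact one_ne_zero h1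

lemma not_le_ex {x y : Fin m →₀ ℕ} (h : ¬ x ≤ y) : ∃ s, y s < x s := by
  rw [Finsupp.le_def] at h
  push_neg at h
  exact h

end Stmt7Aux


open Stmt7Aux in
/-- A minimal monomial sequence `f_1,…,f_n` in `K[x_1,…,x_m]` is a proper
sequence iff `gcd(f_i,f_j) ∣ f_k` for all `i < j < k`. -/
theorem stmt_7 {K : Type*} [Field K] {m n : ℕ} (a : Fin n → (Fin m →₀ ℕ))
    (f : Fin n → MvPolynomial (Fin m) K) (hf : ∀ i, f i = monomial (a i) 1)
    (hmin : ∀ i j : Fin n, i ≠ j → ¬f i ∣ f j) :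
    IsProperSequence f ↔
      ∀ i j k : Fin n, i < j → j < k →
        (monomial (a i ⊓ a j) (1 : K)) ∣ monomial (a k) 1 := by
  classical
  constructor
  · -- proper sequence → gcd condition
    intro hP
    by_contra hbad
    push_neg at hbad
    obtain ⟨i1, j1, k1, hij1, hjk1, hdvd1⟩ := hbad
    have hviol1 : ¬ a i1 ⊓ a j1 ≤ a k1 := fun h => hdvd1 (mono_dvd_of_le h)
    -- minimal bad k
    set Pk : Fin n → Prop := fun k => ∃ i j : Fin n, i < j ∧ j < k ∧ ¬ a i ⊓ a j ≤ a k with hPk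
    have hne : (Finset.univ.filter Pk).Nonempty :=
      ⟨k1, by simp only [Finset.mem_filter, Finset.mem_univ, true_and, hPk]
              exact ⟨i1, j1, hij1, hjk1, hviol1⟩⟩
    obtain ⟨k₀, hk₀mem, hk₀min⟩ := Finset.exists_min_image (Finset.univ.filter Pk) id hne
    have hk₀bad : Pk k₀ := (Finset.mem_filter.mp hk₀mem).2
    have Hk : ∀ u v w : Fin n, u < v → v < w → w < k₀ → a u ⊓ a v ≤ a w := by
      intro u v w h1 h2 h3
      by_contra h
      have hw : w ∈ Finset.univ.filter Pk := by
        simp only [Finset.mem_filter, Finset.mem_univ, true_and, hPk]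
        exact ⟨u, v, h1, h2, h⟩
      exact absurd (hk₀min w hw) (not_le.mpr h3)
    -- minimal bad j for k₀
    set Pj : Fin n → Prop := fun j => ∃ i : Fin n, i < j ∧ j < k₀ ∧ ¬ a i ⊓ a j ≤ a k₀ with hPj
    have hnej : (Finset.univ.filter Pj).Nonempty := by
      obtain ⟨i2, j2, h1, h2, h3⟩ := hk₀bad
      exact ⟨j2, by simp only [Finset.mem_filter, Finset.mem_univ, true_and, hPj]
                    exact ⟨i2, h1, h2, h3⟩⟩
    obtain ⟨j₀, hj₀mem, hj₀min⟩ := Finset.exists_min_image (Finset.univ.filter Pj) id hnej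
    obtain ⟨i₀, hij, hjk, hviol⟩ := (Finset.mem_filter.mp hj₀mem).2
    have Hj : ∀ u v : Fin n, u < v → v < j₀ → a u ⊓ a v ≤ a k₀ := by
      intro u v h1 h2
      by_contra h
      have hv : v ∈ Finset.univ.filter Pj := by
        simp only [Finset.mem_filter, Finset.mem_univ, true_and, hPj]
        exact ⟨u, h1, h2.trans hjk, h⟩
      exact absurd (hj₀min v hv) (not_le.mpr h2)
    obtain ⟨t, ht⟩ := not_le_ex hviol
    have inc : ∀ q : Fin n, q ≠ k₀ → ¬ a q ≤ a k₀ := by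
      intro q hq hle
      exact hmin q k₀ hq (by rw [hf q, hf k₀]; exact mono_dvd_of_le hle)
    -- apply properness at k₀ to the Koszul cycle of (i₀, j₀)
    have hs1 : ∀ q : Fin n, k₀ ≤ q →
        ((Pi.single i₀ (monomial (a j₀ - a i₀ ⊓ a j₀) (1:K)) : Fin n → MvPolynomial (Fin m) K) q
          - (Pi.single j₀ (monomial (a i₀ - a i₀ ⊓ a j₀) (1:K)) : Fin n → MvPolynomial (Fin m) K) q)
          = 0 := by
      intro q hq
      have h1 : q ≠ i₀ := fun h => absurd (h ▸ hq) (not_le.mpr (hij.trans hjk))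
      have h2 : q ≠ j₀ := fun h => absurd (h ▸ hq) (not_le.mpr hjk)
      simp [Pi.single_eq_of_ne h1, Pi.single_eq_of_ne h2]
    have hs2 : ∑ q : Fin n,
        ((Pi.single i₀ (monomial (a j₀ - a i₀ ⊓ a j₀) (1:K)) : Fin n → MvPolynomial (Fin m) K) q
          - (Pi.single j₀ (monomial (a i₀ - a i₀ ⊓ a j₀) (1:K)) : Fin n → MvPolynomial (Fin m) K) q)
          * f q = 0 := by
      simp only [hf]
      rw [Finset.sum_congr rfl (fun q _ => sub_mul _ _ _), Finset.sum_sub_distrib,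
        sum_single_mul, sum_single_mul, monomial_mul, monomial_mul, one_mul]
      have he : (a j₀ - a i₀ ⊓ a j₀) + a i₀ = (a i₀ - a i₀ ⊓ a j₀) + a j₀ := by
        ext s
        simp only [Finsupp.add_apply, Finsupp.tsub_apply, Finsupp.inf_apply]
        omega
      rw [he, sub_self]
    have hmem0 := hP k₀ _ hs1 hs2
    simp only [hf] at hmem0
    -- the cut
    set d0 : Fin m →₀ ℕ := a k₀ + (a i₀ ⊔ a j₀) with hd0
    have hile : a i₀ ≤ d0 := le_sup_left.trans le_add_self
    have LemA : ∀ u : Fin n, u < j₀ → a u + a j₀ ≤ d0 → False := by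
      intro u huj hedge
      by_cases hui : u = i₀
      · subst hui
        have h1 := Finsupp.le_def.mp hedge t
        simp only [Finsupp.add_apply, Finsupp.sup_apply, hd0] at h1
        simp only [Finsupp.inf_apply] at ht
        omega
      · obtain ⟨s, hs⟩ := not_le_ex (inc u (ne_of_lt (huj.trans hjk)))
        have hpK : a u ⊓ a i₀ ≤ a k₀ := by
          rcases lt_or_gt_of_ne hui with h | h
          · exact Hj u i₀ h hij
          · have := Hj i₀ u h huj; rwa [inf_comm] at this
        have hpJ : a u ⊓ a i₀ ≤ a j₀ := by
          rcases lt_or_gt_of_ne hui with h | h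
          · exact Hk u i₀ j₀ h hij hjk
          · have := Hk i₀ u j₀ h huj hjk; rwa [inf_comm] at this
        have h1 := Finsupp.le_def.mp hedge s
        have h2 := Finsupp.le_def.mp hpK s
        have h3 := Finsupp.le_def.mp hpJ s
        simp only [Finsupp.add_apply, Finsupp.sup_apply, Finsupp.inf_apply,
          hd0] at h1 h2 h3
        omega
    by_cases hc : ∃ c : Fin n, j₀ < c ∧ c < k₀ ∧ a c + a j₀ ≤ d0
    · -- case: j₀ has a potential neighbour above
      obtain ⟨c₀, hjc, hck, hcedge⟩ := hc
      have hgc : a i₀ ⊓ a j₀ ≤ a c₀ := Hk i₀ j₀ c₀ hij hjc hck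
      refine cut_lemma a i₀ j₀ k₀ hij hjk (fun q => q < j₀ ∧ a q ≤ d0) ⟨hij, hile⟩
        (fun h => absurd h.1 (lt_irrefl j₀)) (fun q h => h.2) ?_ hmem0
      intro u v huv hvk hedge
      have hu : a u ≤ d0 := le_self_add.trans hedge
      have hv : a v ≤ d0 := le_add_self.trans hedge
      simp only [hu, hv, and_true]
      constructor
      · intro huj
        rcases lt_trichotomy v j₀ with h | h | h
        · exact h
        · exact absurd hedge (fun he => LemA u huj (h ▸ he))
        · exfalso
          by_cases hui : u = i₀
          · -- Lemma Z
            have hedge' : a i₀ + a v ≤ d0 := by rw [← hui]; exact hedge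
            have hgv : a i₀ ⊓ a j₀ ≤ a v := Hk i₀ j₀ v hij h hvk
            have h1 := Finsupp.le_def.mp hcedge t
            have h2 := Finsupp.le_def.mp hedge' t
            have h3 := Finsupp.le_def.mp hgc t
            have h4 := Finsupp.le_def.mp hgv t
            simp only [Finsupp.add_apply, Finsupp.sup_apply, Finsupp.inf_apply,
              hd0] at h1 h2 h3 h4 ht
            omega
          · -- Lemma W
            obtain ⟨s, hs⟩ := not_le_ex (inc u (ne_of_lt (huj.trans hjk)))
            have hpK : a u ⊓ a i₀ ≤ a k₀ := by
              rcases lt_or_gt_of_ne hui with h' | h'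
              · exact Hj u i₀ h' hij
              · have := Hj i₀ u h' huj; rwa [inf_comm] at this
            have hpJ : a u ⊓ a i₀ ≤ a j₀ := by
              rcases lt_or_gt_of_ne hui with h' | h'
              · exact Hk u i₀ j₀ h' hij hjk
              · have := Hk i₀ u j₀ h' huj hjk; rwa [inf_comm] at this
            have hav : a u ⊓ a j₀ ≤ a v := Hk u j₀ v huj h hvk
            have hac : a u ⊓ a j₀ ≤ a c₀ := Hk u j₀ c₀ huj hjc hck
            have h1 := Finsupp.le_def.mp hedge s
            have h2 := Finsupp.le_def.mp hcedge s
            have h3 := Finsupp.le_def.mp hpK s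
            have h4 := Finsupp.le_def.mp hpJ s
            have h5 := Finsupp.le_def.mp hav s
            have h6 := Finsupp.le_def.mp hac s
            simp only [Finsupp.add_apply, Finsupp.sup_apply, Finsupp.inf_apply,
              hd0] at h1 h2 h3 h4 h5 h6
            omega
      · intro hvj
        exact huv.trans hvj
    · -- case: no admissible edge at j₀ from above
      push_neg at hc
      refine cut_lemma a i₀ j₀ k₀ hij hjk (fun q => q < k₀ ∧ q ≠ j₀ ∧ a q ≤ d0)
        ⟨hij.trans hjk, hij.ne, hile⟩ (fun h => absurd rfl h.2.1) (fun q h => h.2.2) ?_ hmem0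
      intro u v huv hvk hedge
      have hu : a u ≤ d0 := le_self_add.trans hedge
      have hv : a v ≤ d0 := le_add_self.trans hedge
      have hune : u ≠ j₀ := by
        intro h
        refine hc v ?_ hvk ?_
        · rw [← h]; exact huv
        · rw [add_comm, ← h]; exact hedge
      have hvne : v ≠ j₀ := by
        intro h
        exact LemA u (by rw [← h]; exact huv) (by rw [← h]; exact hedge)
      simp [hu, hv, hune, hvne, huv.trans hvk, hvk]
  · -- gcd condition → proper sequence
    intro hdvd r w hsupp hsyz
    have hdvd' : ∀ i j k : Fin n, i < j → j < k → a i ⊓ a j ≤ a k :=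
      fun i j k h1 h2 => le_of_mono_dvd (hdvd i j k h1 h2)
    simp only [hf] at hsyz ⊢
    exact fwd a hdvd' r (∑ q, (w q).support.card) w le_rfl hsupp hsyz
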